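/- Let G be a countable group with presentation ⟨a, b | (ba)^{v+1} a (ba)^{-(v+1)} b^{-(u+1)} (ba)^{-v} a (ba)^v b^u, a L a^{-1} L^{-1}, a^p L^q⟩, where u, v ≥ 0 are integers, L = a^{-s} w a^{-t} with s = 2u + 3(3v+2) + 1, t = -1, w = ((ba)^v b^{u+1})² (ba)^v b, and p, q are integers with q ≠ 0 and p/q ≥ 2u + 3(3v+2). Then G is not left-orderable. -/

import Mathlib

set_option maxHeartbeats 1000000

section Helpers

variable {G : Type*} [Group G]

theorem conjpow (g x : G) (k : ℕ) : (g⁻¹*x*g)^k = g⁻¹*x^k*g := by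
  induction k with
  | zero => simp
  | succ i ih => rw [pow_succ, ih, pow_succ]; group

theorem conj_eq_one {g x : G} (h : g⁻¹*x*g = 1) : x = 1 := by
  have e : x = g*(g⁻¹*x*g)*g⁻¹ := by group
  rw [h] at e; simpa using e

end Helpers


/-- Auxiliary bundled left-invariant strict total order. -/
structure LeftOrd (G : Type*) [Group G] where
  lt : G → G → Prop
  trich : ∀ x y, lt x y ∨ x = y ∨ lt y x
  ltrans : ∀ {x y z}, lt x y → lt y z → lt x z
  irr : ∀ x, ¬ lt x x
  mull : ∀ (f : G) {g h}, lt g h → lt (f * g) (f * h)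

namespace LeftOrd

variable {G : Type*} [Group G] (o : LeftOrd G)

/-- The reversed order. -/
def swap : LeftOrd G where
  lt x y := o.lt y x
  trich x y := by
    rcases o.trich y x with h | h | h
    · exact Or.inl h
    · exact Or.inr (Or.inl h.symm)
    · exact Or.inr (Or.inr h)
  ltrans h1 h2 := o.ltrans h2 h1
  irr x := o.irr x
  mull f _ _ h := o.mull f h

theorem asymm {x y : G} (h : o.lt x y) : ¬ o.lt y x := fun h' => o.irr x (o.ltrans h h')

theorem cancel (f : G) {g h : G} (H : o.lt (f * g) (f * h)) : o.lt g h := by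
  have := o.mull f⁻¹ H
  simpa [← mul_assoc] using this

theorem inv_neg {x : G} (h : o.lt 1 x) : o.lt x⁻¹ 1 := by
  have := o.mull x⁻¹ h
  simpa using this

theorem inv_pos {x : G} (h : o.lt x 1) : o.lt 1 x⁻¹ := by
  have := o.mull x⁻¹ h
  simpa using this

theorem mul_pos {x y : G} (hx : o.lt 1 x) (hy : o.lt 1 y) : o.lt 1 (x * y) :=
  o.ltrans hx (by simpa using o.mull x hy)

theorem mul_neg {x y : G} (hx : o.lt x 1) (hy : o.lt y 1) : o.lt (x * y) 1 :=
  o.ltrans (by simpa using o.mull x hy) hx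

/-- nonneg -/
def NN (x : G) : Prop := o.lt 1 x ∨ x = 1
/-- nonpos -/
def NP (x : G) : Prop := o.lt x 1 ∨ x = 1

theorem NN_one : o.NN 1 := Or.inr rfl
theorem NP_one : o.NP 1 := Or.inr rfl
theorem NN_of_pos {x : G} (h : o.lt 1 x) : o.NN x := Or.inl h
theorem NP_of_neg {x : G} (h : o.lt x 1) : o.NP x := Or.inl h

theorem mul_nn {x y : G} (hx : o.NN x) (hy : o.NN y) : o.NN (x * y) := by
  rcases hx with hx | rfl
  · rcases hy with hy | rfl
    · exact Or.inl (o.mul_pos hx hy)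
    · rw [mul_one]; exact Or.inl hx
  · simpa using hy

theorem mul_np {x y : G} (hx : o.NP x) (hy : o.NP y) : o.NP (x * y) := by
  rcases hx with hx | rfl
  · rcases hy with hy | rfl
    · exact Or.inl (o.mul_neg hx hy)
    · rw [mul_one]; exact Or.inl hx
  · simpa using hy

theorem mul_nn_pos {x y : G} (hx : o.NN x) (hy : o.lt 1 y) : o.lt 1 (x * y) := by
  rcases hx with hx | rfl
  · exact o.mul_pos hx hy
  · simpa using hy

theorem mul_pos_nn {x y : G} (hx : o.lt 1 x) (hy : o.NN y) : o.lt 1 (x * y) := by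
  rcases hy with hy | rfl
  · exact o.mul_pos hx hy
  · simpa using hx

theorem mul_np_neg {x y : G} (hx : o.NP x) (hy : o.lt y 1) : o.lt (x * y) 1 := by
  rcases hx with hx | rfl
  · exact o.mul_neg hx hy
  · simpa using hy

theorem mul_neg_np {x y : G} (hx : o.lt x 1) (hy : o.NP y) : o.lt (x * y) 1 := by
  rcases hy with hy | rfl
  · exact o.mul_neg hx hy
  · simpa using hx

theorem pow_nn {x : G} (hx : o.NN x) : ∀ n : ℕ, o.NN (x ^ n) := by
  intro n
  induction n with
  | zero => simpa using o.NN_one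
  | succ m ih => rw [pow_succ]; exact o.mul_nn ih hx

theorem pow_np {x : G} (hx : o.NP x) : ∀ n : ℕ, o.NP (x ^ n) := by
  intro n
  induction n with
  | zero => simpa using o.NP_one
  | succ m ih => rw [pow_succ]; exact o.mul_np ih hx

theorem pow_pos {x : G} (hx : o.lt 1 x) {n : ℕ} (hn : 0 < n) : o.lt 1 (x ^ n) := by
  cases n with
  | zero => omega
  | succ m => rw [pow_succ]; exact o.mul_nn_pos (o.pow_nn (o.NN_of_pos hx) m) hx

theorem pow_neg {x : G} (hx : o.lt x 1) {n : ℕ} (hn : 0 < n) : o.lt (x ^ n) 1 := by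
  cases n with
  | zero => omega
  | succ m => rw [pow_succ]; exact o.mul_np_neg (o.pow_np (o.NP_of_neg hx) m) hx

theorem eq_one_of_pow_eq_one {x : G} {n : ℕ} (o : LeftOrd G) (hn : 0 < n) (h : x ^ n = 1) : x = 1 := by
  rcases o.trich x 1 with hx | hx | hx
  · exact absurd (h ▸ o.pow_neg hx hn) (o.irr 1)
  · exact hx
  · exact absurd (h ▸ o.pow_pos hx hn) (o.irr 1)

theorem inv_np {x : G} (h : o.NN x) : o.NP x⁻¹ := by
  rcases h with h | rfl
  · exact Or.inl (o.inv_neg h)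
  · simp [NP_one]

theorem inv_nn {x : G} (h : o.NP x) : o.NN x⁻¹ := by
  rcases h with h | rfl
  · exact Or.inl (o.inv_pos h)
  · simp [NN_one]

theorem not_pos_of_np {x : G} (h : o.NP x) : ¬ o.lt 1 x := by
  rcases h with h | rfl
  · exact o.asymm h
  · exact o.irr 1

theorem not_neg_of_nn {x : G} (h : o.NN x) : ¬ o.lt x 1 := by
  rcases h with h | rfl
  · exact o.asymm h
  · exact o.irr 1

theorem nn_of_not_neg {x : G} (h : ¬ o.lt x 1) : o.NN x := by
  rcases o.trich x 1 with h' | h' | h'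
  · exact absurd h' h
  · exact Or.inr h'
  · exact Or.inl h'

theorem np_of_not_pos {x : G} (h : ¬ o.lt 1 x) : o.NP x := by
  rcases o.trich x 1 with h' | h' | h'
  · exact Or.inl h'
  · exact Or.inr h'
  · exact absurd h' h

end LeftOrd

theorem core {G : Type*} [Group G] (o : LeftOrd G) (A B C W : G) (u v : ℕ)
    (hC : C = B*A)
    (hWdef : W = (C^v*B^(u+1))^2*C^v*B)
    (hr : A*(C^v*B^u*C^(v+1))*A = C^v*B^(u+1)*C^(v+1))
    (hAW : A*W = W*A)
    (n m : ℕ) (hn : 0 < n)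
    (hsurg : A^m*W^n = 1)
    (hA : o.lt 1 A) : False := by
  have hAne : A ≠ 1 := fun h => o.irr 1 (h ▸ hA)
  -- W^n = (A^m)⁻¹
  have hWn : W^n = (A^m)⁻¹ := eq_inv_of_mul_eq_one_right (by rw [← hsurg])
  -- the key identity I1
  have I1 : W = C^v*B^u*C^(v+1)*B^u*C^(v+1) := by
    have hACi : A * C⁻¹ = B⁻¹ := by rw [hC]; group
    have hWdef' : W = C^v*B^(u+1)*(C^v*B^(u+1))*(C^v*B) := by rw [hWdef, pow_two]; group
    have key1 : W * A = C^v*B^(u+1) * (A * (C^v*B^u*C^(v+1)) * A) := by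
      rw [hr, hWdef']
      calc C^v*B^(u+1)*(C^v*B^(u+1))*(C^v*B)*A = C^v*B^(u+1)*(C^v*B^(u+1))*C^v*(B*A) := by group
        _ = C^v*B^(u+1)*(C^v*B^(u+1))*C^v*C := by rw [← hC]
        _ = C^v*B^(u+1)*(C^v*B^(u+1)*C^(v+1)) := by group
    have e2 : W = A⁻¹ * (C^v*B^(u+1)) * (A * (C^v*B^u*C^(v+1)) * A) := by
      have e : A * W = C^v*B^(u+1) * (A * (C^v*B^u*C^(v+1)) * A) := by rw [hAW]; exact key1
      calc W = A⁻¹*(A*W) := by group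
        _ = A⁻¹*(C^v*B^(u+1) * (A * (C^v*B^u*C^(v+1)) * A)) := by rw [e]
        _ = A⁻¹ * (C^v*B^(u+1)) * (A * (C^v*B^u*C^(v+1)) * A) := by group
    have e3 : A⁻¹ * (C^v*B^(u+1)) = (C^v*B^u*C^(v+1)) * A * (C^(v+1))⁻¹ := by
      have e : C^v*B^(u+1) = (A*(C^v*B^u*C^(v+1))*A)*(C^(v+1))⁻¹ := by
        calc C^v*B^(u+1) = (C^v*B^(u+1)*C^(v+1))*(C^(v+1))⁻¹ := by group
          _ = (A*(C^v*B^u*C^(v+1))*A)*(C^(v+1))⁻¹ := by rw [hr]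
      rw [e]; group
    have e4 : W = (C^v*B^u*C^(v+1)) * A * (C^(v+1))⁻¹ * (A * (C^v*B^u*C^(v+1)) * A) := by
      calc W = (A⁻¹ * (C^v*B^(u+1))) * (A * (C^v*B^u*C^(v+1)) * A) := by rw [e2]
        _ = ((C^v*B^u*C^(v+1)) * A * (C^(v+1))⁻¹) * (A * (C^v*B^u*C^(v+1)) * A) := by rw [e3]
        _ = (C^v*B^u*C^(v+1)) * A * (C^(v+1))⁻¹ * (A * (C^v*B^u*C^(v+1)) * A) := by group
    calc W = (C^v*B^u*C^(v+1)) * A * (C^(v+1))⁻¹ * (A * (C^v*B^u*C^(v+1)) * A) := e4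
      _ = (C^v*B^u*C^(v+1)) * A * (C^(v+1))⁻¹ * (C^v*B^(u+1)*C^(v+1)) := by rw [hr]
      _ = (C^v*B^u*C^(v+1)) * (A * C⁻¹) * (B^(u+1)*C^(v+1)) := by group
      _ = (C^v*B^u*C^(v+1)) * B⁻¹ * (B^(u+1)*C^(v+1)) := by rw [hACi]
      _ = C^v*B^u*C^(v+1)*B^u*C^(v+1) := by group
  -- duality lemmas
  have conjAW : ∀ g : G, (g⁻¹*A*g)^m = ((g⁻¹*W*g)^n)⁻¹ := by
    intro g
    rw [conjpow g A m, conjpow g W n, hWn]; group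
  have D1neg : ∀ g : G, o.lt (g⁻¹*A*g) 1 → ¬ o.lt (g⁻¹*W*g) 1 := by
    intro g hx hw
    have h1 : o.NP ((g⁻¹*A*g)^m) := o.pow_np (o.NP_of_neg hx) m
    rw [conjAW g] at h1
    have h2 := o.inv_nn h1
    rw [inv_inv] at h2
    exact o.not_neg_of_nn h2 (o.pow_neg hw hn)
  have D1pos : ∀ g : G, o.lt 1 (g⁻¹*A*g) → ¬ o.lt 1 (g⁻¹*W*g) := by
    intro g hx hw
    have h1 : o.NN ((g⁻¹*A*g)^m) := o.pow_nn (o.NN_of_pos hx) m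
    rw [conjAW g] at h1
    have h2 := o.inv_np h1
    rw [inv_inv] at h2
    exact o.not_pos_of_np h2 (o.pow_pos hw hn)
  -- sign pair lemmas
  have conjW5 : ∀ g : G, g⁻¹*W*g =
      (g⁻¹*C*g)^v*(g⁻¹*B*g)^u*(g⁻¹*C*g)^(v+1)*(g⁻¹*B*g)^u*(g⁻¹*C*g)^(v+1) := by
    intro g
    rw [I1]; simp only [conjpow]; group
  have SPneg : ∀ g : G, o.lt (g⁻¹*A*g) 1 → o.lt (g⁻¹*B*g) 1 → False := by
    intro g hx hy
    have hz : o.lt (g⁻¹*C*g) 1 := by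
      have e : g⁻¹*C*g = (g⁻¹*B*g)*(g⁻¹*A*g) := by rw [hC]; group
      rw [e]; exact o.mul_neg hy hx
    have hwneg : o.lt (g⁻¹*W*g) 1 := by
      rw [conjW5 g]
      exact o.mul_np_neg (o.mul_np (o.NP_of_neg (o.mul_np_neg (o.mul_np
        (o.pow_np (o.NP_of_neg hz) v) (o.pow_np (o.NP_of_neg hy) u))
        (o.pow_neg hz (Nat.succ_pos v)))) (o.pow_np (o.NP_of_neg hy) u))
        (o.pow_neg hz (Nat.succ_pos v))
    exact D1neg g hx hwneg
  have SPpos : ∀ g : G, o.lt 1 (g⁻¹*A*g) → o.lt 1 (g⁻¹*B*g) → False := by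
    intro g hx hy
    have hz : o.lt 1 (g⁻¹*C*g) := by
      have e : g⁻¹*C*g = (g⁻¹*B*g)*(g⁻¹*A*g) := by rw [hC]; group
      rw [e]; exact o.mul_pos hy hx
    have hwpos : o.lt 1 (g⁻¹*W*g) := by
      rw [conjW5 g]
      exact o.mul_nn_pos (o.mul_nn (o.NN_of_pos (o.mul_nn_pos (o.mul_nn
        (o.pow_nn (o.NN_of_pos hz) v) (o.pow_nn (o.NN_of_pos hy) u))
        (o.pow_pos hz (Nat.succ_pos v)))) (o.pow_nn (o.NN_of_pos hy) u))
        (o.pow_pos hz (Nat.succ_pos v))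
    exact D1pos g hx hwpos
  have I2 : (C^v*B^u)⁻¹*A*(C^v*B^u) = B*(C^(v+1)*A*(C^(v+1))⁻¹)⁻¹ := by
    have e1 : A*(C^v*B^u) = C^v*B^(u+1)*(C^(v+1)*A⁻¹*(C^(v+1))⁻¹) := by
      have e : A*(C^v*B^u) = (A*(C^v*B^u*C^(v+1))*A)*(A⁻¹*(C^(v+1))⁻¹) := by group
      rw [e, hr]; group
    calc (C^v*B^u)⁻¹*A*(C^v*B^u) = (C^v*B^u)⁻¹*(A*(C^v*B^u)) := by group
      _ = (C^v*B^u)⁻¹*(C^v*B^(u+1)*(C^(v+1)*A⁻¹*(C^(v+1))⁻¹)) := by rw [e1]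
      _ = B*(C^(v+1)*A*(C^(v+1))⁻¹)⁻¹ := by group
  have hW1of : m = 0 → W = 1 := by
    intro hm0
    exact o.eq_one_of_pow_eq_one hn (by rw [hWn, hm0]; simp)
  have hWnegof : 0 < m → o.lt W 1 := by
    intro hmpos
    have h1 : o.lt (W^n) 1 := by rw [hWn]; exact o.inv_neg (o.pow_pos hA hmpos)
    rcases o.trich W 1 with h|h|h
    · exact h
    · exfalso; rw [h] at h1; simp at h1; exact o.irr 1 h1
    · exact absurd h1 (o.asymm (o.pow_pos h hn))
  -- B trichotomy
  rcases o.trich B 1 with hBneg | hB1 | hBpos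
  case inr.inl =>
    -- B = 1 : relator forces A^2 = 1
    exfalso
    rw [hB1] at hr hC
    rw [one_mul] at hC
    rw [hC] at hr
    have e : A^(2*v+1) * A^2 = A^(2*v+1) * 1 := by
      rw [mul_one]
      calc A^(2*v+1)*A^2 = A*(A^v*(1:G)^u*A^(v+1))*A := by group
        _ = A^v*(1:G)^(u+1)*A^(v+1) := hr
        _ = A^(2*v+1) := by group
    have hA2 : A^2 = 1 := mul_left_cancel e
    exact o.irr 1 (hA2 ▸ o.pow_pos hA (by norm_num))
  case inr.inr =>
    exact SPpos 1 (by simpa using hA) (by simpa using hBpos)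
  -- main case : B < 1
  have hBne : B ≠ 1 := fun h => o.irr 1 (h ▸ hBneg)
  -- v = 0 separately
  rcases Nat.eq_zero_or_pos v with hv0 | hvpos
  · subst hv0
    have hr' : A*(B^u*C)*A = B^(u+1)*C := by
      have := hr; simpa using this
    have rv0 : A*B^(u+1)*A = B^(u+2) := by
      have e : (A*B^(u+1)*A)*A = B^(u+2)*A := by
        calc (A*B^(u+1)*A)*A = A*(B^u*(B*A))*A := by group
          _ = A*(B^u*C)*A := by rw [← hC]
          _ = B^(u+1)*C := hr'
          _ = B^(u+1)*(B*A) := by rw [hC]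
          _ = B^(u+2)*A := by group
      exact mul_right_cancel e
    have eWv0 : W = B^(2*u+3) := by
      rw [hWdef, pow_two]; group
    rcases Nat.eq_zero_or_pos m with hm0 | hmpos
    · subst hm0
      have hW1 : W = 1 := o.eq_one_of_pow_eq_one hn (by simpa using hWn)
      have hB1 : B = 1 := o.eq_one_of_pow_eq_one (n := 2*u+3) (by norm_num) (by rw [← eWv0, hW1])
      exact hBne hB1
    · have aid : (B^(u+1))⁻¹*A*B^(u+1) = B*A⁻¹ := by
        calc (B^(u+1))⁻¹*A*B^(u+1) = (B^(u+1))⁻¹*(A*B^(u+1)*A)*A⁻¹ := by group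
          _ = (B^(u+1))⁻¹*B^(u+2)*A⁻¹ := by rw [rv0]
          _ = B*A⁻¹ := by group
      have hAm : A^m = (B^((2*u+3)*n))⁻¹ := by
        have : W^n = B^((2*u+3)*n) := by rw [eWv0, ← pow_mul]
        rw [← inv_inv (A^m), ← hWn, this]
      have hcomm : (B^(u+1))⁻¹*A^m*B^(u+1) = A^m := by rw [hAm]; group
      have h1 : o.lt ((B*A⁻¹)^m) 1 := o.pow_neg (o.mul_neg hBneg (o.inv_neg hA)) hmpos
      have h2 : (B*A⁻¹)^m = A^m := by rw [← aid, conjpow, hcomm]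
      exact o.asymm (o.pow_pos hA hmpos) (h2 ▸ h1)
  -- v ≥ 1 : trichotomy on C
  rcases o.trich C 1 with hCneg | hC1 | hCpos
  · -- C < 1
    rcases Nat.eq_zero_or_pos m with hm0 | hmpos
    · have hW1 : W = 1 := hW1of hm0
      have eRot : (C^v)⁻¹*W*C^v = B^u*C^(v+1)*B^u*C^(2*v+1) := by rw [I1]; group
      have e1 : (1:G) = B^u*C^(v+1)*B^u*C^(2*v+1) := by
        rw [← eRot, hW1]; group
      have hneg : o.lt (B^u*C^(v+1)*B^u*C^(2*v+1)) 1 :=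
        o.mul_np_neg (o.mul_np (o.NP_of_neg (o.mul_np_neg (o.pow_np (o.NP_of_neg hBneg) u)
          (o.pow_neg hCneg (Nat.succ_pos v)))) (o.pow_np (o.NP_of_neg hBneg) u))
          (o.pow_neg hCneg (by omega))
      rw [← e1] at hneg
      exact o.irr 1 hneg
    · have hWneg := hWnegof hmpos
      have eT : (C^v*B^u)⁻¹*W*(C^v*B^u) = C^(v+1)*B^u*C^(2*v+1)*B^u := by rw [I1]; group
      have hTneg : o.lt ((C^v*B^u)⁻¹*W*(C^v*B^u)) 1 := by
        rw [eT]
        exact o.mul_neg_np (o.mul_np_neg (o.NP_of_neg (o.mul_neg_np (o.pow_neg hCneg (Nat.succ_pos v))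
          (o.pow_np (o.NP_of_neg hBneg) u))) (o.pow_neg hCneg (by omega)))
          (o.pow_np (o.NP_of_neg hBneg) u)
      have hΔpos : o.lt 1 ((C^v*B^u)⁻¹*A*(C^v*B^u)) := by
        rcases o.trich ((C^v*B^u)⁻¹*A*(C^v*B^u)) 1 with h|h|h
        · exact absurd hTneg (D1neg _ h)
        · exact absurd (conj_eq_one h) hAne
        · exact h
      have eR1 : ((C^(v+1))⁻¹)⁻¹*W*((C^(v+1))⁻¹) = C^(2*v+1)*B^u*C^(v+1)*B^u := by
        rw [I1]; group
      have hR1neg : o.lt (((C^(v+1))⁻¹)⁻¹*W*((C^(v+1))⁻¹)) 1 := by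
        rw [eR1]
        exact o.mul_neg_np (o.mul_np_neg (o.NP_of_neg (o.mul_neg_np (o.pow_neg hCneg (by omega))
          (o.pow_np (o.NP_of_neg hBneg) u))) (o.pow_neg hCneg (Nat.succ_pos v)))
          (o.pow_np (o.NP_of_neg hBneg) u)
      have hγ'pos : o.lt 1 (((C^(v+1))⁻¹)⁻¹*A*((C^(v+1))⁻¹)) := by
        rcases o.trich (((C^(v+1))⁻¹)⁻¹*A*((C^(v+1))⁻¹)) 1 with h|h|h
        · exact absurd hR1neg (D1neg _ h)
        · exact absurd (conj_eq_one h) hAne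
        · exact h
      have hγ'pos' : o.lt 1 (C^(v+1)*A*(C^(v+1))⁻¹) := by
        have e : ((C^(v+1))⁻¹)⁻¹*A*((C^(v+1))⁻¹) = C^(v+1)*A*(C^(v+1))⁻¹ := by group
        rwa [e] at hγ'pos
      have hBpos' : o.lt 1 B := by
        have hB' : B = ((C^v*B^u)⁻¹*A*(C^v*B^u))*(C^(v+1)*A*(C^(v+1))⁻¹) := by
          rw [I2]; group
        rw [hB']
        exact o.mul_pos hΔpos hγ'pos'
      exact o.asymm hBneg hBpos'
  · -- C = 1
    exfalso
    have h01 : B*A = 1 := by rw [← hC, hC1]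
    have hBA : B = A⁻¹ := eq_inv_of_mul_eq_one_left h01
    rw [hC1, hBA] at hr
    simp only [one_pow, one_mul, mul_one] at hr
    have e : A^3 = (A*A⁻¹^u*A) * (A⁻¹^(u+1))⁻¹ := by group
    rw [hr] at e
    simp only [mul_inv_cancel] at e
    exact o.irr 1 (e ▸ o.pow_pos hA (by norm_num))
  · -- C > 1
    rcases Nat.eq_zero_or_pos u with hu0 | hupos
    · -- u = 0
      have eW : W = C^(3*v+2) := by rw [I1, hu0]; group
      rcases Nat.eq_zero_or_pos m with hm0 | hmpos
      · have hW1 : W = 1 := hW1of hm0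
        have hC1' : C = 1 := o.eq_one_of_pow_eq_one (n := 3*v+2) (by omega) (by rw [← eW, hW1])
        exact o.irr 1 (hC1' ▸ hCpos)
      · have hWneg := hWnegof hmpos
        rw [eW] at hWneg
        exact o.asymm (o.pow_pos hCpos (by omega)) hWneg
    · -- u ≥ 1
      have hγδ : ∀ k:ℤ, (C^k)⁻¹*B*C^k = C*((C^k)⁻¹*A*C^k)⁻¹ := by
        intro k
        have hCB : C*A⁻¹ = B := by rw [hC]; group
        calc (C^k)⁻¹*B*C^k = (C^k)⁻¹*(C*A⁻¹)*C^k := by rw [hCB]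
          _ = C*((C^k)⁻¹*A*C^k)⁻¹ := by group
      have hδpos_of_γneg : ∀ k:ℤ, o.lt ((C^k)⁻¹*A*C^k) 1 → o.lt 1 ((C^k)⁻¹*B*C^k) := by
        intro k h
        rw [hγδ k]
        exact o.mul_pos hCpos (o.inv_pos h)
      have F5c : ∀ j:ℤ, (C^j)⁻¹*W*C^j =
          C^(2*v+1)*((C^((v:ℤ)+1+j))⁻¹*B*C^((v:ℤ)+1+j))^u*C^(v+1)*((C^((v:ℤ)+1+j))⁻¹*B*C^((v:ℤ)+1+j))^u := by
        intro j; rw [I1]; simp only [conjpow]; group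
      have F1c : ∀ j:ℤ, (C^j)⁻¹*W*C^j =
          ((C^(-(v:ℤ)+j))⁻¹*B*C^(-(v:ℤ)+j))^u*((C^(-(2*(v:ℤ))-1+j))⁻¹*B*C^(-(2*(v:ℤ))-1+j))^u*C^(3*v+2) := by
        intro j; rw [I1]; simp only [conjpow]; group
      by_cases hseed : ∃ k:ℤ, o.lt 1 ((C^k)⁻¹*B*C^k)
      · obtain ⟨sd, hs⟩ := hseed
        rcases Nat.eq_zero_or_pos m with hm0 | hmpos
        · have hW1 : W = 1 := hW1of hm0
          have e := F5c (sd-((v:ℤ)+1))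
          have hk : (v:ℤ)+1+(sd-((v:ℤ)+1)) = sd := by ring
          rw [hk, hW1] at e
          have e' : (1:G) = C^(2*v+1)*((C^sd)⁻¹*B*C^sd)^u*C^(v+1)*((C^sd)⁻¹*B*C^sd)^u := by
            rw [← e]; group
          have hpos : o.lt 1 (C^(2*v+1)*((C^sd)⁻¹*B*C^sd)^u*C^(v+1)*((C^sd)⁻¹*B*C^sd)^u) :=
            o.mul_pos_nn (o.mul_pos (o.mul_pos_nn (o.pow_pos hCpos (by omega))
              (o.pow_nn (o.NN_of_pos hs) u)) (o.pow_pos hCpos (Nat.succ_pos v)))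
              (o.pow_nn (o.NN_of_pos hs) u)
          rw [← e'] at hpos
          exact o.irr 1 hpos
        · have hWneg := hWnegof hmpos
          have R1 : ∀ k:ℤ, o.lt 1 ((C^k)⁻¹*B*C^k) →
              o.lt 1 ((C^(k-((v:ℤ)+1)))⁻¹*B*C^(k-((v:ℤ)+1))) := by
            intro k hk
            have e := F5c (k-((v:ℤ)+1))
            have hk' : (v:ℤ)+1+(k-((v:ℤ)+1)) = k := by ring
            rw [hk'] at e
            have hval : o.lt 1 ((C^(k-((v:ℤ)+1)))⁻¹*W*C^(k-((v:ℤ)+1))) := by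
              rw [e]
              exact o.mul_pos_nn (o.mul_pos (o.mul_pos_nn (o.pow_pos hCpos (by omega))
                (o.pow_nn (o.NN_of_pos hk) u)) (o.pow_pos hCpos (Nat.succ_pos v)))
                (o.pow_nn (o.NN_of_pos hk) u)
            rcases o.trich ((C^(k-((v:ℤ)+1)))⁻¹*A*C^(k-((v:ℤ)+1))) 1 with h|h|h
            · exact hδpos_of_γneg _ h
            · exact absurd (conj_eq_one h) hAne
            · exact absurd hval (D1pos _ h)
          have R2 : ∀ a:ℤ, o.lt 1 ((C^a)⁻¹*B*C^a) →
              o.lt 1 ((C^(a-((v:ℤ)+1)))⁻¹*B*C^(a-((v:ℤ)+1))) →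
              o.lt 1 ((C^(a+(v:ℤ)))⁻¹*B*C^(a+(v:ℤ))) := by
            intro a h1 h2
            have e := F1c (a+(v:ℤ))
            have e1 : -(v:ℤ)+(a+(v:ℤ)) = a := by ring
            have e2 : -(2*(v:ℤ))-1+(a+(v:ℤ)) = a-((v:ℤ)+1) := by ring
            rw [e1, e2] at e
            have hval : o.lt 1 ((C^(a+(v:ℤ)))⁻¹*W*C^(a+(v:ℤ))) := by
              rw [e]
              exact o.mul_nn_pos (o.mul_nn (o.pow_nn (o.NN_of_pos h1) u)
                (o.pow_nn (o.NN_of_pos h2) u)) (o.pow_pos hCpos (by omega))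
            rcases o.trich ((C^(a+(v:ℤ)))⁻¹*A*C^(a+(v:ℤ))) 1 with h|h|h
            · exact hδpos_of_γneg _ h
            · exact absurd (conj_eq_one h) hAne
            · exact absurd hval (D1pos _ h)
          have step1 : ∀ t:ℤ, o.lt 1 ((C^t)⁻¹*B*C^t) →
              o.lt 1 ((C^(t-1))⁻¹*B*C^(t-1)) := by
            intro t ht
            have h1 := R1 t ht
            have h2 := R2 t ht h1
            have h3 := R1 (t+(v:ℤ)) h2
            have e : t+(v:ℤ)-((v:ℤ)+1) = t-1 := by ring
            rwa [e] at h3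
          have down : ∀ t:ℤ, o.lt 1 ((C^t)⁻¹*B*C^t) →
              ∀ d:ℕ, o.lt 1 ((C^(t-(d:ℤ)))⁻¹*B*C^(t-(d:ℤ))) := by
            intro t ht d
            induction d with
            | zero => simpa using ht
            | succ i ih =>
              have h1 := step1 _ ih
              have e : t-(i:ℤ)-1 = t-((i+1:ℕ):ℤ) := by push_cast; ring
              rwa [e] at h1
          have up : ∀ M:ℕ, o.lt 1 ((C^(sd+(M:ℤ)*(v:ℤ)))⁻¹*B*C^(sd+(M:ℤ)*(v:ℤ))) := by
            intro M
            induction M with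
            | zero => simpa using hs
            | succ i ih =>
              have h1 := R1 _ ih
              have h2 := R2 _ ih h1
              have e : sd+(i:ℤ)*(v:ℤ)+(v:ℤ) = sd+((i+1:ℕ):ℤ)*(v:ℤ) := by push_cast; ring
              rwa [e] at h2
          have hall : ∀ k:ℤ, o.lt 1 ((C^k)⁻¹*B*C^k) := by
            intro k
            obtain ⟨M, hM⟩ : ∃ M:ℕ, k ≤ sd+(M:ℤ)*(v:ℤ) := by
              refine ⟨(k-sd).toNat, ?_⟩
              have hv1 : (1:ℤ) ≤ (v:ℤ) := by exact_mod_cast hvpos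
              have h1 := Int.self_le_toNat (k-sd)
              have h2 : (0:ℤ) ≤ ((k-sd).toNat:ℤ) := by positivity
              nlinarith
            have h1 := down _ (up M) ((sd+(M:ℤ)*(v:ℤ)-k).toNat)
            have e : sd+(M:ℤ)*(v:ℤ)-(((sd+(M:ℤ)*(v:ℤ)-k).toNat):ℤ) = k := by
              rw [Int.toNat_of_nonneg (by omega)]; ring
            rwa [e] at h1
          have e := F1c 0
          have e0 : ((C^((0:ℤ)))⁻¹*W*C^((0:ℤ))) = W := by group
          rw [e0] at e
          have hpos : o.lt 1 W := by
            rw [e]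
            exact o.mul_nn_pos (o.mul_nn (o.pow_nn (o.NN_of_pos (hall _)) u)
              (o.pow_nn (o.NN_of_pos (hall _)) u)) (o.pow_pos hCpos (by omega))
          exact o.asymm hpos hWneg
      · -- no seed
        push_neg at hseed
        have hδneg : ∀ k:ℤ, o.lt ((C^k)⁻¹*B*C^k) 1 := by
          intro k
          rcases o.trich ((C^k)⁻¹*B*C^k) 1 with h|h|h
          · exact h
          · exact absurd (conj_eq_one h) hBne
          · exact absurd h (hseed k)
        have hγpos : ∀ k:ℤ, o.lt 1 ((C^k)⁻¹*A*C^k) := by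
          intro k
          rcases o.trich ((C^k)⁻¹*A*C^k) 1 with h|h|h
          · exact (SPneg _ h (hδneg k)).elim
          · exact absurd (conj_eq_one h) hAne
          · exact h
        have hγ'pos : o.lt 1 (C^(v+1)*A*(C^(v+1))⁻¹) := by
          have h1 := hγpos (-((v:ℤ)+1))
          have e : (C^(-((v:ℤ)+1)))⁻¹*A*C^(-((v:ℤ)+1)) = C^(v+1)*A*(C^(v+1))⁻¹ := by group
          rwa [e] at h1
        have hγm1pos : o.lt 1 (C*A*C⁻¹) := by
          have h1 := hγpos (-1)
          have e : (C^(-1:ℤ))⁻¹*A*C^(-1:ℤ) = C*A*C⁻¹ := by group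
          rwa [e] at h1
        have hδm1neg : o.lt (C^(v+1)*B*(C^(v+1))⁻¹) 1 := by
          have h1 := hδneg (-((v:ℤ)+1))
          have e : (C^(-((v:ℤ)+1)))⁻¹*B*C^(-((v:ℤ)+1)) = C^(v+1)*B*(C^(v+1))⁻¹ := by group
          rwa [e] at h1
        have hΔneg : o.lt ((C^v*B^u)⁻¹*A*(C^v*B^u)) 1 := by
          rw [I2]
          exact o.mul_neg hBneg (o.inv_neg hγ'pos)
        have h0 : o.lt 1 ((C^v*B^u)⁻¹*B*(C^v*B^u)) := by
          rcases o.trich ((C^v*B^u)⁻¹*B*(C^v*B^u)) 1 with h|h|h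
          · exact (SPneg _ hΔneg h).elim
          · exact absurd (conj_eq_one h) hBne
          · exact h
        have h0' : o.lt 1 ((B^u)⁻¹*(((C^v)⁻¹*B*C^v)*B^u)) := by
          have e : (C^v*B^u)⁻¹*B*(C^v*B^u) = (B^u)⁻¹*(((C^v)⁻¹*B*C^v)*B^u) := by group
          rwa [e] at h0
        have hbase : o.lt (B^u) (((C^v)⁻¹*B*C^v)*B^u) := by
          have h1 := o.mull (B^u) h0'
          have e : B^u*((B^u)⁻¹*(((C^v)⁻¹*B*C^v)*B^u)) = ((C^v)⁻¹*B*C^v)*B^u := by group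
          rw [mul_one, e] at h1
          exact h1
        have chain : ∀ k:ℕ, o.lt (B^u) (((C^v)⁻¹*B*C^v)^(k+1)*B^u) := by
          intro k
          induction k with
          | zero => simpa [pow_one] using hbase
          | succ i ih =>
            have h1 := o.mull ((C^v)⁻¹*B*C^v) ih
            have e : ((C^v)⁻¹*B*C^v)*(((C^v)⁻¹*B*C^v)^(i+1)*B^u) =
                ((C^v)⁻¹*B*C^v)^(i+1+1)*B^u := by
              rw [← mul_assoc, ← pow_succ']
            rw [e] at h1
            exact o.ltrans hbase h1
        have hBu_neg : o.lt (B^u) 1 := o.pow_neg hBneg hupos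
        have hstep2 : o.lt (((C^v)⁻¹*B*C^v)^u*B^u) (((C^v)⁻¹*B*C^v)^u) := by
          have h1 := o.mull (((C^v)⁻¹*B*C^v)^u) hBu_neg
          rwa [mul_one] at h1
        have hlt : o.lt (B^u) (((C^v)⁻¹*B*C^v)^u) := by
          have h1 := chain (u-1)
          have e : (u-1)+1 = u := Nat.succ_pred_eq_of_pos hupos
          rw [e] at h1
          exact o.ltrans h1 hstep2
        have Xid : ((B^u*C^(v+1))⁻¹*(C^(v+1))⁻¹)⁻¹*A*((B^u*C^(v+1))⁻¹*(C^(v+1))⁻¹) =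
            (C*A*C⁻¹)⁻¹*(C^(v+1)*B*(C^(v+1))⁻¹) := by
          have eBC : (B^u*C^(v+1))*A = (C^v)⁻¹*A⁻¹*(C^v*B^(u+1)*C^(v+1)) := by
            have e : (B^u*C^(v+1))*A = (C^v)⁻¹*A⁻¹*(A*(C^v*B^u*C^(v+1))*A) := by group
            rw [e, hr]
          calc ((B^u*C^(v+1))⁻¹*(C^(v+1))⁻¹)⁻¹*A*((B^u*C^(v+1))⁻¹*(C^(v+1))⁻¹)
              = C^(v+1)*((B^u*C^(v+1))*A)*((B^u*C^(v+1))⁻¹*(C^(v+1))⁻¹) := by group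
            _ = C^(v+1)*((C^v)⁻¹*A⁻¹*(C^v*B^(u+1)*C^(v+1)))*((B^u*C^(v+1))⁻¹*(C^(v+1))⁻¹) := by
                rw [eBC]
            _ = (C*A*C⁻¹)⁻¹*(C^(v+1)*B*(C^(v+1))⁻¹) := by group
        have hXneg : o.lt (((B^u*C^(v+1))⁻¹*(C^(v+1))⁻¹)⁻¹*A*((B^u*C^(v+1))⁻¹*(C^(v+1))⁻¹)) 1 := by
          rw [Xid]
          exact o.mul_neg (o.inv_neg hγm1pos) hδm1neg
        have eTg : ((B^u*C^(v+1))⁻¹*(C^(v+1))⁻¹)⁻¹*W*((B^u*C^(v+1))⁻¹*(C^(v+1))⁻¹) =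
            C^(v+1)*B^u*C^(2*v+1)*B^u := by
          rw [I1]; group
        have hTnn : ¬ o.lt (C^(v+1)*B^u*C^(2*v+1)*B^u) 1 := by
          intro h
          exact D1neg _ hXneg (by rw [eTg]; exact h)
        have eOg : (C⁻¹)⁻¹*W*(C⁻¹) = C^(v+1)*B^u*C^(2*v+1)*(((C^v)⁻¹*B*C^v))^u := by
          rw [I1, conjpow]; group
        have hγm1pos' : o.lt 1 ((C⁻¹)⁻¹*A*(C⁻¹)) := by
          have e : (C⁻¹)⁻¹*A*(C⁻¹) = C*A*C⁻¹ := by group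
          rw [e]; exact hγm1pos
        have hOnp : ¬ o.lt 1 (C^(v+1)*B^u*C^(2*v+1)*(((C^v)⁻¹*B*C^v))^u) := by
          intro h
          exact D1pos _ hγm1pos' (by rw [eOg]; exact h)
        have hQlt : o.lt (C^(v+1)*B^u*C^(2*v+1)*B^u)
            (C^(v+1)*B^u*C^(2*v+1)*(((C^v)⁻¹*B*C^v))^u) := by
          have h1 := o.mull (C^(v+1)*B^u*C^(2*v+1)) hlt
          exact h1
        rcases o.trich (C^(v+1)*B^u*C^(2*v+1)*B^u) 1 with h|h|h
        · exact hTnn h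
        · exact hOnp (h ▸ hQlt)
        · exact hOnp (o.ltrans h hQlt)



/-- A (nontrivial) group is left-orderable if it admits a left-invariant
strict total order; by convention the trivial group is not left-orderable. -/
def IsLeftOrderable (G : Type*) [Group G] : Prop :=
  Nontrivial G ∧ ∃ lt : G → G → Prop,
    IsStrictTotalOrder G lt ∧ ∀ f g h : G, lt g h → lt (f * g) (f * h)

/-- The group presented by
`⟨a, b | (ba)^{v+1} a (ba)^{-(v+1)} b^{-(u+1)} (ba)^{-v} a (ba)^v b^u,
 aLa⁻¹L⁻¹, a^p L^q⟩` with `L = a^{-s} w a^{-t}`, `s = 2u+3(3v+2)+1`, `t = -1`,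
`w = ((ba)^v b^{u+1})² (ba)^v b`, `q ≠ 0` and `p/q ≥ 2u + 3(3v+2)`,
is not left-orderable. -/
theorem stmt13 (u v : ℕ) (p q : ℤ) (hq : q ≠ 0)
    (hpq : (2 * (u : ℚ) + 3 * (3 * (v : ℚ) + 2)) ≤ (p : ℚ) / (q : ℚ))
    (a b : FreeGroup Bool)
    (ha : a = FreeGroup.of true) (hb : b = FreeGroup.of false)
    (s t : ℤ) (hs : s = 2 * u + 3 * (3 * v + 2) + 1) (ht : t = -1)
    (w L : FreeGroup Bool)
    (hw : w = ((b * a) ^ v * b ^ (u + 1)) ^ 2 * (b * a) ^ v * b)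
    (hL : L = a ^ (-s) * w * a ^ (-t))
    (rels : Set (FreeGroup Bool))
    (hrels : rels = {(b * a) ^ (v + 1) * a * (b * a) ^ (-((v : ℤ) + 1)) *
        b ^ (-((u : ℤ) + 1)) * (b * a) ^ (-(v : ℤ)) * a * (b * a) ^ v * b ^ u,
      a * L * a⁻¹ * L⁻¹, a ^ p * L ^ q})
    (G : Type*) [Group G] [Countable G] (iso : G ≃* PresentedGroup rels) :
    ¬ IsLeftOrderable G := by
  rintro ⟨hnt, lt, hsto, hmul⟩
  have o : LeftOrd G :=
    { lt := lt
      trich := fun x y => trichotomous_of lt x y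
      ltrans := fun {x y z} h1 h2 => hsto.toIsStrictOrder.toIsTrans.trans x y z h1 h2
      irr := fun x => irrefl_of lt x
      mull := fun f _ _ h => hmul f _ _ h }
  set F : FreeGroup Bool →* G :=
    (MulEquiv.toMonoidHom iso.symm).comp (PresentedGroup.mk rels) with hFdef
  have hπ1 : ∀ r ∈ rels, F r = 1 := by
    intro r hrel
    have h0 : PresentedGroup.mk rels r = 1 :=
      (QuotientGroup.eq_one_iff r).mpr (Subgroup.subset_normalClosure hrel)
    simp [hFdef, h0]
  have hmem1 : (b*a)^(v+1)*a*(b*a)^(-((v:ℤ)+1))*b^(-((u:ℤ)+1))*(b*a)^(-(v:ℤ))*a*(b*a)^v*b^u ∈ rels := by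
    rw [hrels]; exact Set.mem_insert _ _
  have hmem2 : a*L*a⁻¹*L⁻¹ ∈ rels := by
    rw [hrels]; exact Set.mem_insert_of_mem _ (Set.mem_insert _ _)
  have hmem3 : a^p*L^q ∈ rels := by
    rw [hrels]
    exact Set.mem_insert_of_mem _ (Set.mem_insert_of_mem _ rfl)
  set A := F a with hAdef
  set B := F b with hBdef
  have hπr1 : (B*A)^(v+1)*A*(B*A)^(-((v:ℤ)+1))*B^(-((u:ℤ)+1))*(B*A)^(-(v:ℤ))*A*(B*A)^v*B^u = 1 := by
    have h0 := hπ1 _ hmem1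
    simpa [map_mul, map_pow, map_zpow] using h0
  set Lg := F L with hLgdef
  set Wg := F w with hWgdef
  have hπr2 : A*Lg*A⁻¹*Lg⁻¹ = 1 := by
    have h0 := hπ1 _ hmem2
    simpa [map_mul, map_inv] using h0
  have hπr3 : A^p*Lg^q = 1 := by
    have h0 := hπ1 _ hmem3
    simpa [map_mul, map_zpow] using h0
  have hWg : Wg = ((B*A)^v*B^(u+1))^2*(B*A)^v*B := by
    rw [hWgdef, hw]
    simp [map_mul, map_pow]
    rfl
  have hLg : Lg = A^(-s)*Wg*A := by
    rw [hLgdef, hL, ht]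
    simp [map_mul, map_zpow]
    rfl
  -- introduce C
  obtain ⟨Cg, hCg⟩ : ∃ Cg : G, Cg = B*A := ⟨B*A, rfl⟩
  rw [← hCg] at hπr1 hWg
  have hr' : A*(Cg^v*B^u*Cg^(v+1))*A = Cg^v*B^(u+1)*Cg^(v+1) := by
    have key : A*(Cg^v*B^u*Cg^(v+1))*A =
        (A*Cg^v*B^u) *
          (Cg^(v+1)*A*Cg^(-((v:ℤ)+1))*B^(-((u:ℤ)+1))*Cg^(-(v:ℤ))*A*Cg^v*B^u) *
          (A*Cg^v*B^u)⁻¹ * (Cg^v*B^(u+1)*Cg^(v+1)) := by group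
    rw [hπr1] at key
    rw [key]; group
  -- commuting
  have hALg : A*Lg = Lg*A := by
    have e : A*Lg = (A*Lg*A⁻¹*Lg⁻¹)*(Lg*A) := by group
    rw [hπr2, one_mul] at e
    exact e
  have hAW : A*Wg = Wg*A := by
    have hALg' : A*(A^(-s)*Wg*A) = (A^(-s)*Wg*A)*A := by rw [← hLg]; exact hALg
    calc A*Wg = A^s*(A*(A^(-s)*Wg*A))*A⁻¹ := by group
      _ = A^s*((A^(-s)*Wg*A)*A)*A⁻¹ := by rw [hALg']
      _ = Wg*A := by group
  have hcomm : Commute A Wg := hAW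
  have hLg2 : Lg = A^(-(s-1))*Wg := by
    calc Lg = A^(-s)*Wg*A := hLg
      _ = A^(-s)*(Wg*A) := by group
      _ = A^(-s)*(A*Wg) := by rw [hAW]
      _ = A^(-(s-1))*Wg := by group
  have hsurgZ : A^(p-(s-1)*q)*Wg^q = 1 := by
    have e : Lg^q = A^((-(s-1))*q)*Wg^q := by
      rw [hLg2, (hcomm.zpow_left (-(s-1))).mul_zpow q, ← zpow_mul]
    calc A^(p-(s-1)*q)*Wg^q = A^p*(A^((-(s-1))*q)*Wg^q) := by group
      _ = A^p*Lg^q := by rw [← e]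
      _ = 1 := hπr3
  -- obtain nat-exponent surgery data
  obtain ⟨nn, mm, hnn, hsurgN⟩ : ∃ nn mm : ℕ, 0 < nn ∧ A^mm*Wg^nn = 1 := by
    rcases lt_trichotomy q 0 with hqneg | hq0 | hqpos
    · refine ⟨(-q).toNat, ((s-1)*q-p).toNat, by omega, ?_⟩
      have hple : p ≤ (s-1)*q := by
        have hs1 : ((s:ℤ):ℚ)-1 = 2*(u:ℚ)+3*(3*(v:ℚ)+2) := by
          rw [hs]; push_cast; ring
        have hq' : ((q:ℤ):ℚ) < 0 := by exact_mod_cast hqneg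
        have h1 : ((s:ℤ):ℚ)-1 ≤ (p:ℚ)/(q:ℚ) := by rw [hs1]; exact hpq
        have h2 : (p:ℚ) ≤ (((s:ℤ):ℚ)-1)*(q:ℚ) := by
          rw [le_div_iff_of_neg hq'] at h1
          exact h1
        have h3 : (p:ℚ) ≤ (((s-1)*q : ℤ) : ℚ) := by push_cast; push_cast at h2; linarith
        exact_mod_cast h3
      have hsurgZ' : A^((s-1)*q-p)*Wg^(-q) = 1 := by
        have hsw : A^((s-1)*q-p)*Wg^(-q) = Wg^(-q)*A^((s-1)*q-p) :=
          (hcomm.zpow_zpow ((s-1)*q-p) (-q)).eq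
        calc A^((s-1)*q-p)*Wg^(-q) = Wg^(-q)*A^((s-1)*q-p) := hsw
          _ = (A^(p-(s-1)*q)*Wg^q)⁻¹ := by group
          _ = 1 := by rw [hsurgZ]; simp
      have e1 : (((-q).toNat:ℤ)) = -q := Int.toNat_of_nonneg (by omega)
      have e2 : ((((s-1)*q-p).toNat:ℤ)) = (s-1)*q-p := Int.toNat_of_nonneg (by omega)
      rw [← zpow_natCast A (((s-1)*q-p).toNat), ← zpow_natCast Wg ((-q).toNat), e1, e2]
      exact hsurgZ' 
    · exact absurd hq0 hq
    · refine ⟨q.toNat, (p-(s-1)*q).toNat, by omega, ?_⟩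
      have hple : (s-1)*q ≤ p := by
        have hs1 : ((s:ℤ):ℚ)-1 = 2*(u:ℚ)+3*(3*(v:ℚ)+2) := by
          rw [hs]; push_cast; ring
        have hq' : (0:ℚ) < ((q:ℤ):ℚ) := by exact_mod_cast hqpos
        have h1 : ((s:ℤ):ℚ)-1 ≤ (p:ℚ)/(q:ℚ) := by rw [hs1]; exact hpq
        have h2 : (((s:ℤ):ℚ)-1)*(q:ℚ) ≤ (p:ℚ) := by
          rw [le_div_iff₀ hq'] at h1
          exact h1
        have h3 : ((((s-1)*q : ℤ)) : ℚ) ≤ (p:ℚ) := by push_cast; push_cast at h2; linarith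
        exact_mod_cast h3
      have e1 : ((q.toNat:ℤ)) = q := Int.toNat_of_nonneg (by omega)
      have e2 : (((p-(s-1)*q).toNat:ℤ)) = p-(s-1)*q := Int.toNat_of_nonneg (by omega)
      rw [← zpow_natCast A ((p-(s-1)*q).toNat), ← zpow_natCast Wg (q.toNat), e1, e2]
      exact hsurgZ
  -- trichotomy on A
  rcases o.trich A 1 with hAneg | hA1 | hApos
  · exact core o.swap A B Cg Wg u v hCg hWg hr' hAW nn mm hnn hsurgN hAneg
  · -- A = 1 : the group is trivial, contradiction with Nontrivial
    have hCgB : Cg = B := by rw [hCg, hA1, mul_one]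
    rw [hA1, hCgB] at hπr1
    have hB1 : B = 1 := by
      have e : B⁻¹ = B^(v+1)*1*B^(-((v:ℤ)+1))*B^(-((u:ℤ)+1))*B^(-(v:ℤ))*1*B^v*B^u := by
        group
      rw [hπr1] at e
      exact inv_eq_one.mp e
    have hgen : ∀ x : FreeGroup Bool, F x = 1 := by
      intro x
      induction x using FreeGroup.induction_on with
      | C1 => simp
      | of y =>
        cases y
        · show F (FreeGroup.of false) = 1
          rw [← hb, ← hBdef]
          exact hB1
        · show F (FreeGroup.of true) = 1
          rw [← ha, ← hAdef]
          exact hA1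
      | inv_of y hy => rw [map_inv, hy, inv_one]
      | mul x y hx hy => rw [map_mul, hx, hy, one_mul]
    have hsurj : Function.Surjective F := by
      rw [hFdef]
      exact (iso.symm.surjective).comp (PresentedGroup.mk_surjective rels)
    obtain ⟨x, y, hxy⟩ := hnt
    obtain ⟨x', hx'⟩ := hsurj x
    obtain ⟨y', hy'⟩ := hsurj y
    exact hxy (by rw [← hx', ← hy', hgen x', hgen y'])
  · exact core o A B Cg Wg u v hCg hWg hr' hAW nn mm hnn hsurgN hApos
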